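/- There is no local Artinian Gorenstein k-algebra with Hilbert function (1,2,3,1); i.e., there is no local Artinian k-algebra A with maximal ideal 𝔪, residue field k, dim_k(𝔪/𝔪²) = 2, dim_k(𝔪²/𝔪³) = 3, dim_k 𝔪³ = 1, 𝔪⁴ = 0, and one-dimensional socle. -/

import Mathlib

set_option synthInstance.maxHeartbeats 1000000
set_option maxHeartbeats 1000000

/-- The socle of a commutative ring `A` relative to an ideal `m`:
the ideal of all elements annihilating `m`. -/
def socleOf {A : Type*} [CommRing A] (m : Ideal A) : Ideal A where
  carrier := {a : A | ∀ b ∈ m, a * b = 0}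
  add_mem' := by intro a b ha hb c hc; rw [add_mul, ha c hc, hb c hc, add_zero]
  zero_mem' := by intro c hc; rw [zero_mul]
  smul_mem' := by intro r a ha c hc; rw [smul_eq_mul, mul_assoc, ha c hc, mul_zero]

/-- `dim_k 𝔪^i/𝔪^{i+1}`, realised as the `k`-dimension of the image of `𝔪^i` in
the quotient ring `A/𝔪^{i+1}`. -/
noncomputable def hilbOf (k : Type*) {A : Type*} [Field k] [CommRing A] [Algebra k A]
    (m : Ideal A) (i : ℕ) : ℕ :=
  Module.finrank k (((m ^ i).map (Ideal.Quotient.mk (m ^ (i + 1)))).restrictScalars k)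

theorem aux_no_1231
    (k A : Type*) [Field k]
    [CommRing A] [Algebra k A] [FiniteDimensional k A]
    (m : Ideal A)
    (hH1 : hilbOf k m 1 = 2)
    (hH2 : hilbOf k m 2 = 3)
    (hH3 : Module.finrank k ((m ^ 3).restrictScalars k) = 1)
    (hlev : m ^ 4 = ⊥)
    (hGor : Module.finrank k ((socleOf m).restrictScalars k) = 1) :
    False := by
  have h21 : m ^ (1 + 1) = m ^ 2 := by norm_num
  have h32 : m ^ (2 + 1) = m ^ 3 := by norm_num
  haveI : FiniteDimensional k (A ⧸ (m ^ (1 + 1))) :=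
    Module.Finite.of_surjective (Ideal.Quotient.mkₐ k (m ^ (1 + 1))).toLinearMap
      Ideal.Quotient.mk_surjective
  haveI : FiniteDimensional k (A ⧸ (m ^ (2 + 1))) :=
    Module.Finite.of_surjective (Ideal.Quotient.mkₐ k (m ^ (2 + 1))).toLinearMap
      Ideal.Quotient.mk_surjective
  -- socle = m^3
  have hsoc_le : (m ^ 3).restrictScalars k ≤ (socleOf m).restrictScalars k := by
    intro a ha
    show ∀ b ∈ m, a * b = 0
    intro b hb
    have h4 : a * b ∈ m ^ 4 := by
      rw [pow_succ]
      exact Ideal.mul_mem_mul ha hb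
    rw [hlev] at h4
    simpa using h4
  have hsoc : (m ^ 3).restrictScalars k = (socleOf m).restrictScalars k :=
    Submodule.eq_of_le_of_finrank_le hsoc_le (by rw [hGor, hH3])
  -- basis of m/m^2
  set W := ((m ^ 1).map (Ideal.Quotient.mk (m ^ (1 + 1)))).restrictScalars k with hWdef
  have hWrank : Module.finrank k W = 2 := hH1
  let BW : Module.Basis (Fin 2) k W := Module.finBasisOfFinrankEq k W hWrank
  have hB0 : (BW 0 : A ⧸ m ^ (1 + 1)) ∈ (m ^ 1).map (Ideal.Quotient.mk (m ^ (1 + 1))) := (BW 0).2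
  have hB1 : (BW 1 : A ⧸ m ^ (1 + 1)) ∈ (m ^ 1).map (Ideal.Quotient.mk (m ^ (1 + 1))) := (BW 1).2
  rw [Ideal.mem_map_iff_of_surjective _ Ideal.Quotient.mk_surjective] at hB0 hB1
  obtain ⟨x, hxm1, hxeq⟩ := hB0
  obtain ⟨y, hym1, hyeq⟩ := hB1
  have hxm : x ∈ m := by rwa [pow_one] at hxm1
  have hym : y ∈ m := by rwa [pow_one] at hym1
  -- decomposition of elements of m
  have hdec : ∀ b ∈ m, ∃ s t : k, b - (s • x + t • y) ∈ m ^ 2 := by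
    intro b hb
    have hb1 : b ∈ m ^ 1 := by rwa [pow_one]
    have hmem : Ideal.Quotient.mk (m ^ (1 + 1)) b ∈ W :=
      Ideal.mem_map_of_mem _ hb1
    set v : W := ⟨Ideal.Quotient.mk (m ^ (1 + 1)) b, hmem⟩ with hv
    refine ⟨BW.repr v 0, BW.repr v 1, ?_⟩
    have hrepr := BW.sum_repr v
    rw [Fin.sum_univ_two] at hrepr
    have hrepr' : (Ideal.Quotient.mk (m ^ (1 + 1))) b
        = BW.repr v 0 • (BW 0 : A ⧸ m ^ (1 + 1)) + BW.repr v 1 • (BW 1 : A ⧸ m ^ (1 + 1)) := by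
      have := congrArg (Subtype.val) hrepr
      simpa [hv] using this.symm
    have hmem2 : b - (BW.repr v 0 • x + BW.repr v 1 • y) ∈ m ^ (1 + 1) := by
      rw [← Ideal.Quotient.eq_zero_iff_mem]
      have hmk : ∀ (s : k) (a : A),
          Ideal.Quotient.mk (m ^ (1 + 1)) (s • a) = s • Ideal.Quotient.mk (m ^ (1 + 1)) a :=
        fun s a => map_smul (Ideal.Quotient.mkₐ k (m ^ (1 + 1))) s a
      rw [map_sub, map_add, hmk, hmk, hxeq, hyeq, ← hrepr']
      simp
    simpa only [h21] using hmem2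
  -- the two linear maps from m^2 (restricted to k)
  set M2 := (m ^ 2).restrictScalars k with hM2
  set M3 := (m ^ 3).restrictScalars k with hM3
  have hxz : ∀ z : M2, (z : A) * x ∈ m ^ 3 := by
    intro z
    rw [pow_succ]
    exact Ideal.mul_mem_mul z.2 hxm
  have hyz : ∀ z : M2, (z : A) * y ∈ m ^ 3 := by
    intro z
    rw [pow_succ]
    exact Ideal.mul_mem_mul z.2 hym
  let φ : M2 →ₗ[k] M3 × M3 :=
    { toFun := fun z => (⟨(z : A) * x, hxz z⟩, ⟨(z : A) * y, hyz z⟩)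
      map_add' := by intro a b; ext <;> simp [add_mul]
      map_smul' := by intro c a; ext <;> simp [smul_mul_assoc]
      }
  let ψ : M2 →ₗ[k] A ⧸ m ^ (2 + 1) :=
    (Ideal.Quotient.mkₐ k (m ^ (2 + 1))).toLinearMap.comp (M2.subtype)
  -- kernel of ψ
  have hkerψ : LinearMap.ker ψ = Submodule.comap M2.subtype M3 := by
    ext z
    simp [ψ, Ideal.Quotient.eq_zero_iff_mem, hM3, h32]
  -- range of ψ
  have hrangeψ : LinearMap.range ψ
      = ((m ^ 2).map (Ideal.Quotient.mk (m ^ (2 + 1)))).restrictScalars k := by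
    ext w
    constructor
    · rintro ⟨z, rfl⟩
      exact Ideal.mem_map_of_mem _ z.2
    · intro hw
      rw [Submodule.restrictScalars_mem,
        Ideal.mem_map_iff_of_surjective _ Ideal.Quotient.mk_surjective] at hw
      obtain ⟨a, ha, rfl⟩ := hw
      exact ⟨⟨a, ha⟩, rfl⟩
  have hrangeψrank : Module.finrank k (LinearMap.range ψ) = 3 := by
    rw [hrangeψ]
    exact hH2
  have hm3le : m ^ 3 ≤ m ^ 2 := Ideal.pow_le_pow_right (by norm_num)
  have hm3le' : M3 ≤ M2 := hm3le
  have hcomaprank : Module.finrank k (Submodule.comap M2.subtype M3) = 1 := by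
    rw [(Submodule.comapSubtypeEquivOfLe hm3le').finrank_eq]
    exact hH3
  have hM2rank : Module.finrank k M2 = 4 := by
    have := LinearMap.finrank_range_add_finrank_ker ψ
    rw [hrangeψrank, hkerψ, hcomaprank] at this
    omega
  -- kernel of φ is contained in M3
  have hkerφ : LinearMap.ker φ ≤ Submodule.comap M2.subtype M3 := by
    intro z hz
    have hz' : φ z = 0 := hz
    have hzx : (z : A) * x = 0 := congrArg Subtype.val (congrArg Prod.fst hz')
    have hzy : (z : A) * y = 0 := congrArg Subtype.val (congrArg Prod.snd hz')
    have hzsoc : (z : A) ∈ (socleOf m).restrictScalars k := by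
      show ∀ b ∈ m, (z : A) * b = 0
      intro b hb
      obtain ⟨s, t, hc⟩ := hdec b hb
      have hzc : (z : A) * (b - (s • x + t • y)) = 0 := by
        have h4 : (z : A) * (b - (s • x + t • y)) ∈ m ^ 4 := by
          have h22 : m ^ 4 = m ^ 2 * m ^ 2 := by ring
          rw [h22]
          exact Ideal.mul_mem_mul z.2 hc
        rw [hlev] at h4
        simpa using h4
      have hexp : (z : A) * b = (z : A) * (b - (s • x + t • y))
          + s • ((z : A) * x) + t • ((z : A) * y) := by
        rw [mul_sub, mul_add, mul_smul_comm, mul_smul_comm]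
        ring
      rw [hexp, hzc, hzx, hzy, smul_zero, smul_zero, add_zero, add_zero]
    rw [← hsoc] at hzsoc
    exact hzsoc
  have hkerφrank : Module.finrank k (LinearMap.ker φ) ≤ 1 := by
    rw [← hcomaprank]
    exact Submodule.finrank_mono hkerφ
  have hrangeφrank : Module.finrank k (LinearMap.range φ) ≤ 2 := by
    have h := Submodule.finrank_le (LinearMap.range φ)
    have hp : Module.finrank k (M3 × M3) = 2 := by
      rw [Module.finrank_prod, hM3, hH3]
    omega
  have := LinearMap.finrank_range_add_finrank_ker φ
  rw [hM2rank] at this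
  omega

/-- There is no local Artinian Gorenstein `k`-algebra with Hilbert
function `(1,2,3,1)`: there is no local Artinian `k`-algebra `A` with maximal ideal `𝔪`,
residue field `k`, `dim_k 𝔪/𝔪² = 2`, `dim_k 𝔪²/𝔪³ = 3`, `dim_k 𝔪³ = 1`, `𝔪⁴ = 0`, and
one-dimensional socle. -/
theorem no_local_gorenstein_hilbert_1231
    (k A : Type*) [Field k] [IsAlgClosed k]
    (hchar2 : (2 : k) ≠ 0) (hchar3 : (3 : k) ≠ 0)
    [CommRing A] [Algebra k A] [IsLocalRing A] [FiniteDimensional k A]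
    (hres : Function.Bijective (algebraMap k (A ⧸ IsLocalRing.maximalIdeal A)))
    (hH1 : hilbOf k (IsLocalRing.maximalIdeal A) 1 = 2)
    (hH2 : hilbOf k (IsLocalRing.maximalIdeal A) 2 = 3)
    (hH3 : Module.finrank k ((IsLocalRing.maximalIdeal A ^ 3).restrictScalars k) = 1)
    (hlev : IsLocalRing.maximalIdeal A ^ 4 = ⊥)
    (hGor : Module.finrank k
      ((socleOf (IsLocalRing.maximalIdeal A)).restrictScalars k) = 1) :
    False := by
  exact aux_no_1231 k A (IsLocalRing.maximalIdeal A) hH1 hH2 hH3 hlev hGor
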